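/- arXiv:0912.5472 — 3 statements merged into one kernel-verified Lean document; each statement's English description precedes it below -/
import Mathlib

section
/- Let g be a finite-dimensional real simple Lie algebra whose Killing form is negative definite, and suppose A ∈ End(g) satisfies [A U, X] + [A X, U] = 0 for all U, X ∈ g. Then A = c·id for some c ∈ ℝ. -/
open LieAlgebra

/-- The inner product `⟨X,Y⟩ = -κ(X,Y)`, the negative of the Killing form. -/
noncomputable def ip (R : Type*) (g : Type*) [CommRing R] [LieRing g] [LieAlgebra R g]
    (X Y : g) : R :=
  - killingForm R g X Y

/-- The endomorphism `X ∧ Y : Z ↦ ⟨X,Z⟩Y - ⟨Y,Z⟩X`, where `⟨·,·⟩ = -κ(·,·)`. -/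
noncomputable def wedge (R : Type*) (g : Type*) [CommRing R] [LieRing g] [LieAlgebra R g]
    (X Y : g) : Module.End R g :=
  (-(killingForm R g X)).smulRight Y - (-(killingForm R g Y)).smulRight X

attribute [local instance] LieRing.ofAssociativeRing

/-- In a simple real Lie algebra, every `ad` has trace zero. -/
lemma trace_ad_zero (g : Type*) [LieRing g] [LieAlgebra ℝ g]
    [LieAlgebra.IsSimple ℝ g] (z : g) :
    LinearMap.trace ℝ g (LieAlgebra.ad ℝ g z) = 0 := by
  classical
  let T : g →ₗ[ℝ] ℝ := (LinearMap.trace ℝ g).comp (LieAlgebra.ad ℝ g).toLinearMap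
  have hbr : ∀ a b : g, T ⁅a, b⁆ = 0 := by
    intro a b
    have : LieAlgebra.ad ℝ g ⁅a, b⁆ = ⁅LieAlgebra.ad ℝ g a, LieAlgebra.ad ℝ g b⁆ :=
      LieHom.map_lie _ _ _
    simp only [T, LinearMap.comp_apply, LieHom.coe_toLinearMap, this, Ring.lie_def, map_sub]
    rw [LinearMap.trace_mul_comm]
    ring
  let I : LieIdeal ℝ g :=
    { LinearMap.ker T with
      lie_mem := fun {x m} _ => by
        show ⁅x, m⁆ ∈ LinearMap.ker T
        simpa [LinearMap.mem_ker] using hbr x m }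
  have hmem : ∀ w : g, w ∈ I ↔ T w = 0 := fun w => Iff.rfl
  have hne : I ≠ ⊥ := by
    intro hbot
    apply LieAlgebra.IsSimple.non_abelian (R := ℝ) (L := g)
    constructor
    intro x y
    by_contra hxy
    have : (⁅(x : g), (y : g)⁆ : g) ∈ I := (hmem _).2 (hbr x y)
    rw [hbot] at this
    exact hxy (by simpa using this)
  have htop : I = ⊤ := (LieAlgebra.IsSimple.eq_bot_or_eq_top I).resolve_left hne
  have : z ∈ I := htop ▸ LieSubmodule.mem_top z
  simpa [T, LinearMap.mem_ker] using (hmem z).1 this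

/-- Symmetry of `A` with respect to the Killing form, given the compatibility `⁅A X, Z⁆ = ⁅X, A Z⁆`. -/
lemma killing_symm (g : Type*) [LieRing g] [LieAlgebra ℝ g] [Module.Finite ℝ g]
    [LieAlgebra.IsSimple ℝ g]
    (A : Module.End ℝ g) (hb : ∀ X Z : g, ⁅A X, Z⁆ = ⁅X, A Z⁆) (x y : g) :
    killingForm ℝ g (A x) y = killingForm ℝ g x (A y) := by
  classical
  have hAd : ∀ X : g, LieAlgebra.ad ℝ g (A X) = LieAlgebra.ad ℝ g X * A := by
    intro X
    ext Z
    simpa [LieAlgebra.ad_apply, Module.End.mul_apply] using hb X Z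
  have h1 : killingForm ℝ g (A x) y
      = LinearMap.trace ℝ g ((LieAlgebra.ad ℝ g x * A) * LieAlgebra.ad ℝ g y) := by
    rw [killingForm_apply_apply, hAd]; rfl
  have h2 : killingForm ℝ g x (A y)
      = LinearMap.trace ℝ g (LieAlgebra.ad ℝ g x * (LieAlgebra.ad ℝ g y * A)) := by
    rw [killingForm_apply_apply, hAd]; rfl
  rw [h1, h2]
  set a := LieAlgebra.ad ℝ g x
  set b := LieAlgebra.ad ℝ g y
  have key : LinearMap.trace ℝ g (A * (b * a)) = LinearMap.trace ℝ g (A * (a * b)) := by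
    have hsub : LinearMap.trace ℝ g (A * (b * a) - A * (a * b)) = 0 := by
      have hcomm : A * (b * a) - A * (a * b) = A * (b * a - a * b) := (mul_sub A _ _).symm
      have hadbr : b * a - a * b = LieAlgebra.ad ℝ g ⁅y, x⁆ := by
        rw [LieHom.map_lie]; simp [Ring.lie_def]; rfl
      rw [hcomm, hadbr, LinearMap.trace_mul_comm, ← hAd ⁅y, x⁆]
      exact trace_ad_zero g _
    have := sub_eq_zero.mp (by simpa [map_sub] using hsub)
    exact this
  calc LinearMap.trace ℝ g ((a * A) * b)
      = LinearMap.trace ℝ g (b * (a * A)) := LinearMap.trace_mul_comm ℝ _ _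
    _ = LinearMap.trace ℝ g (A * (b * a)) := by rw [← mul_assoc, LinearMap.trace_mul_comm]
    _ = LinearMap.trace ℝ g (A * (a * b)) := key
    _ = LinearMap.trace ℝ g ((a * b) * A) := LinearMap.trace_mul_comm ℝ _ _
    _ = LinearMap.trace ℝ g (a * (b * A)) := by rw [mul_assoc]

theorem stmt_5 (g : Type*) [LieRing g] [LieAlgebra ℝ g] [Module.Finite ℝ g]
    [LieAlgebra.IsSimple ℝ g]
    (hneg : ∀ X : g, X ≠ 0 → killingForm ℝ g X X < 0)
    (A : Module.End ℝ g)
    (hA : ∀ U X : g, ⁅A U, X⁆ + ⁅A X, U⁆ = 0) :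
    ∃ c : ℝ, A = c • LinearMap.id := by
  classical
  -- Reformulate the hypothesis
  have hb : ∀ X Z : g, ⁅A X, Z⁆ = ⁅X, A Z⁆ := by
    intro X Z
    have h : ⁅A X, Z⁆ = -⁅A Z, X⁆ := eq_neg_of_add_eq_zero_left (by rw [add_comm]; exact hA Z X)
    rw [h, lie_skew]
  have hsym : ∀ x y : g, killingForm ℝ g (A x) y = killingForm ℝ g x (A y) :=
    killing_symm g A hb
  -- Nondegeneracy of the Killing form from definiteness
  have hnd : ∀ w : g, (∀ z : g, killingForm ℝ g w z = 0) → w = 0 := by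
    intro w hw
    by_contra hw0
    exact absurd (hw w) (ne_of_lt (hneg w hw0))
  -- `g` is nontrivial
  haveI : Nontrivial g := by
    by_contra hnt
    rw [not_nontrivial_iff_subsingleton] at hnt
    exact LieAlgebra.IsSimple.non_abelian (R := ℝ) (L := g)
      ⟨fun x y => Subsingleton.elim _ _⟩
  -- Inner product space structure from the negative of the Killing form
  letI core : InnerProductSpace.Core ℝ g :=
  { inner := fun x y => - killingForm ℝ g x y
    conj_inner_symm := fun x y => by
      simp only [conj_trivial]
      exact congrArg Neg.neg (LieModule.traceForm_comm ℝ g g y x)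
    re_inner_nonneg := fun x => by
      rcases eq_or_ne x 0 with h | h
      · simp [h]
      · simpa using le_of_lt (neg_pos.mpr (hneg x h))
    add_left := fun x y z => by simp only [map_add, LinearMap.add_apply, neg_add]
    smul_left := fun x y r => by
      simp only [map_smul, LinearMap.smul_apply, smul_eq_mul, conj_trivial, mul_neg]
    definite := fun x hx => by
      by_contra h
      exact absurd (neg_eq_zero.mp hx) (ne_of_lt (hneg x h)) }
  letI : NormedAddCommGroup g := core.toNormedAddCommGroup
  letI : InnerProductSpace ℝ g := InnerProductSpace.ofCore core.toCore
  haveI : FiniteDimensional ℝ g := ‹Module.Finite ℝ g›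
  -- `A` is a symmetric operator
  have hTsym : A.IsSymmetric := by
    intro x y
    show - killingForm ℝ g (A x) y = - killingForm ℝ g x (A y)
    rw [hsym]
  -- get a real eigenvalue
  obtain ⟨v, hv_pair⟩ :=
    hTsym.hasEigenvalue_iSup_of_finiteDimensional.exists_hasEigenvector
  have hv0 : v ≠ 0 := hv_pair.right
  set c : ℝ := (⨆ x : { x : g // x ≠ 0 }, RCLike.re (inner ℝ (A x) (x : g) : ℝ) / ‖(x : g)‖ ^ 2 : ℝ)
    with hc
  have hv : A v = c • v := hv_pair.apply_eq_smul
  -- the eigenspace of `c` is a Lie ideal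
  have hlie : ∀ (x m : g), A m = c • m → A ⁅x, m⁆ = c • ⁅x, m⁆ := by
    intro x m hm
    have : ∀ z : g, killingForm ℝ g (A ⁅x, m⁆ - c • ⁅x, m⁆) z = 0 := by
      intro z
      have h1 : killingForm ℝ g (A ⁅x, m⁆) z = c * killingForm ℝ g ⁅x, m⁆ z := by
        rw [hsym, LieModule.traceForm_apply_lie_apply, ← hb m z, hm]
        rw [LieModule.traceForm_apply_lie_apply]
        simp [smul_lie]
      simp only [map_sub, map_smul, LinearMap.sub_apply, LinearMap.smul_apply, h1,
        smul_eq_mul]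
      ring
    exact sub_eq_zero.mp (hnd _ this)
  let I : LieIdeal ℝ g :=
    { LinearMap.ker (A - c • LinearMap.id) with
      lie_mem := fun {x m} hm => by
        show ⁅x, m⁆ ∈ LinearMap.ker (A - c • LinearMap.id)
        have hm' : A m = c • m := by
          have : m ∈ LinearMap.ker (A - c • LinearMap.id) := hm
          rw [LinearMap.mem_ker] at this
          simpa [sub_eq_zero, LinearMap.sub_apply] using this
        rw [LinearMap.mem_ker]
        simp only [LinearMap.sub_apply, LinearMap.smul_apply, LinearMap.id_apply]
        rw [hlie x m hm', sub_self] }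
  have hIne : I ≠ ⊥ := by
    intro hbot
    apply hv0
    have hvI : v ∈ I := by
      show v ∈ LinearMap.ker (A - c • LinearMap.id)
      rw [LinearMap.mem_ker]
      simp only [LinearMap.sub_apply, LinearMap.smul_apply, LinearMap.id_apply]
      rw [hv, sub_self]
    rw [hbot] at hvI
    simpa using hvI
  have hItop : I = ⊤ := (LieAlgebra.IsSimple.eq_bot_or_eq_top I).resolve_left hIne
  refine ⟨c, ?_⟩
  ext x
  have hx : x ∈ I := hItop ▸ LieSubmodule.mem_top x
  have : A x - c • x = 0 := by
    have := LinearMap.mem_ker.mp (hx : x ∈ LinearMap.ker (A - c • LinearMap.id))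
    simpa [LinearMap.sub_apply] using this
  simpa [sub_eq_zero] using this
end

section
/- Under the hypotheses of the Proposition (dim g > 4, K and Φ satisfying (i) and (ii)) together with the condition Tr(K_Z ∘ ad_U) = 0 for all Z,U ∈ g, one has the cyclic identity σ_{XYZ}[K_X Y − K_Y X + 2Φ(X,Y), Z] = 0 for all X,Y,Z ∈ g. -/
open LieAlgebra

section Aux

variable (g : Type*) [LieRing g] [LieAlgebra ℝ g] [Module.Finite ℝ g]

lemma trace_smulRight' (f : g →ₗ[ℝ] ℝ) (x : g) :
    LinearMap.trace ℝ g (f.smulRight x) = f x := by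
  have h : f.smulRight x = dualTensorHom ℝ g g (f ⊗ₜ x) := by ext z; simp
  rw [h, LinearMap.trace_eq_contract_apply]
  simp

lemma smulRight_comp' (f : g →ₗ[ℝ] ℝ) (x : g) (C : Module.End ℝ g) :
    (f.smulRight x) ∘ₗ C = (f ∘ₗ C).smulRight x := by
  ext z; simp

/-- Trace of a wedge composed with `ad U`. -/
lemma trace_wedge_comp_ad (A B U : g) :
    LinearMap.trace ℝ g (wedge ℝ g A B ∘ₗ ad ℝ g U) = 2 * killingForm ℝ g ⁅A, B⁆ U := by
  rw [wedge, LinearMap.sub_comp, map_sub, smulRight_comp', smulRight_comp',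
    trace_smulRight', trace_smulRight']
  have hAB : killingForm ℝ g ⁅A, B⁆ U = killingForm ℝ g A ⁅B, U⁆ :=
    LieModule.traceForm_apply_lie_apply ℝ g g A B U
  have h1 : ((-(killingForm ℝ g A)) ∘ₗ ad ℝ g U) B = killingForm ℝ g ⁅A, B⁆ U := by
    simp only [LinearMap.comp_apply, LinearMap.neg_apply, ad_apply, hAB]
    have : (⁅U, B⁆ : g) = -⁅B, U⁆ := by rw [← lie_skew]
    rw [this, map_neg, neg_neg]
  have h2 : ((-(killingForm ℝ g B)) ∘ₗ ad ℝ g U) A = - killingForm ℝ g ⁅A, B⁆ U := by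
    simp only [LinearMap.comp_apply, LinearMap.neg_apply, ad_apply]
    have hBU : killingForm ℝ g B ⁅U, A⁆ = killingForm ℝ g ⁅B, U⁆ A :=
      (LieModule.traceForm_apply_lie_apply ℝ g g B U A).symm
    have hsym : killingForm ℝ g ⁅B, U⁆ A = killingForm ℝ g A ⁅B, U⁆ :=
      LieModule.traceForm_comm ℝ g g _ _
    rw [hBU, hsym, ← hAB]
  rw [h1, h2]
  ring

/-- Trace of a commutator `⁅ad V, T⁆` composed with `ad U`. -/
lemma trace_commutator_comp_ad (V U : g) (T : Module.End ℝ g) :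
    LinearMap.trace ℝ g ((⁅ad ℝ g V, T⁆ : Module.End ℝ g) ∘ₗ ad ℝ g U)
      = LinearMap.trace ℝ g (T ∘ₗ ad ℝ g ⁅U, V⁆) := by
  have hAd : ad ℝ g ⁅U, V⁆ = ⁅ad ℝ g U, ad ℝ g V⁆ := by
    ext W; simp [Ring.lie_def, lie_lie]
  rw [hAd]
  simp only [Ring.lie_def, ← Module.End.mul_eq_comp, sub_mul, mul_sub, map_sub]
  have c1 : LinearMap.trace ℝ g (ad ℝ g V * T * ad ℝ g U)
      = LinearMap.trace ℝ g (T * (ad ℝ g U * ad ℝ g V)) := by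
    rw [LinearMap.trace_mul_cycle, ← mul_assoc, LinearMap.trace_mul_comm, mul_assoc]
  have c2 : LinearMap.trace ℝ g (T * ad ℝ g V * ad ℝ g U)
      = LinearMap.trace ℝ g (T * (ad ℝ g V * ad ℝ g U)) := by rw [mul_assoc]
  rw [c1, c2]

end Aux

theorem stmt_6 (g : Type*) [LieRing g] [LieAlgebra ℝ g] [Module.Finite ℝ g]
    [LieAlgebra.IsSimple ℝ g]
    (hneg : ∀ X : g, X ≠ 0 → killingForm ℝ g X X < 0)
    (hdim : 4 < Module.finrank ℝ g)
    (K : g →ₗ[ℝ] Module.End ℝ g)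
    (hskew : ∀ Z X Y : g, ip ℝ g (K Z X) Y + ip ℝ g X (K Z Y) = 0)
    (htr : ∀ Z U : g, LinearMap.trace ℝ g (K Z ∘ₗ ad ℝ g U) = 0)
    (Φ : g →ₗ[ℝ] g →ₗ[ℝ] g)
    (hΦalt : ∀ X : g, Φ X X = 0)
    (hi : ∀ X Y Z : g, ip ℝ g (Φ X Y) Z + ip ℝ g (Φ Y Z) X + ip ℝ g (Φ Z X) Y = 0)
    (hii : ∀ X Y Z : g,
      (⁅ad ℝ g ⁅X, Y⁆, K Z⁆ + ad ℝ g ⁅K X Y - K Y X, Z⁆ + wedge ℝ g (Φ X Y) Z)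
      + (⁅ad ℝ g ⁅Y, Z⁆, K X⁆ + ad ℝ g ⁅K Y Z - K Z Y, X⁆ + wedge ℝ g (Φ Y Z) X)
      + (⁅ad ℝ g ⁅Z, X⁆, K Y⁆ + ad ℝ g ⁅K Z X - K X Z, Y⁆ + wedge ℝ g (Φ Z X) Y) = 0)
    :
    ∀ X Y Z : g,
      ⁅K X Y - K Y X + (2 : ℝ) • Φ X Y, Z⁆
      + ⁅K Y Z - K Z Y + (2 : ℝ) • Φ Y Z, X⁆
      + ⁅K Z X - K X Z + (2 : ℝ) • Φ Z X, Y⁆ = 0 := by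
  intro X Y Z
  set W : g := ⁅K X Y - K Y X + (2 : ℝ) • Φ X Y, Z⁆
      + ⁅K Y Z - K Z Y + (2 : ℝ) • Φ Y Z, X⁆
      + ⁅K Z X - K X Z + (2 : ℝ) • Φ Z X, Y⁆ with hWdef
  have key : ∀ U : g, killingForm ℝ g W U = 0 := by
    intro U
    have h := congrArg
      (fun T : Module.End ℝ g => LinearMap.trace ℝ g (T ∘ₗ ad ℝ g U)) (hii X Y Z)
    simp only [LinearMap.add_comp, map_add, LinearMap.zero_comp, map_zero] at h
    rw [trace_commutator_comp_ad g ⁅X, Y⁆ U (K Z),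
        trace_commutator_comp_ad g ⁅Y, Z⁆ U (K X),
        trace_commutator_comp_ad g ⁅Z, X⁆ U (K Y),
        htr, htr, htr,
        trace_wedge_comp_ad, trace_wedge_comp_ad, trace_wedge_comp_ad,
        ← killingForm_apply_apply, ← killingForm_apply_apply, ← killingForm_apply_apply] at h
    -- h : 0 + κ(⁅KXY-KYX,Z⁆,U) + 2κ(⁅ΦXY,Z⁆,U) + ... = 0
    have hexp : killingForm ℝ g W U
        = (killingForm ℝ g ⁅K X Y - K Y X, Z⁆ U + 2 * killingForm ℝ g ⁅Φ X Y, Z⁆ U)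
        + (killingForm ℝ g ⁅K Y Z - K Z Y, X⁆ U + 2 * killingForm ℝ g ⁅Φ Y Z, X⁆ U)
        + (killingForm ℝ g ⁅K Z X - K X Z, Y⁆ U + 2 * killingForm ℝ g ⁅Φ Z X, Y⁆ U) := by
      rw [hWdef]
      simp only [add_lie, smul_lie, map_add, map_smul, LinearMap.add_apply,
        LinearMap.smul_apply, smul_eq_mul]

    rw [hexp]
    linarith [h]
  have hWW := key W
  by_contra hne
  exact absurd hWW (ne_of_lt (hneg W hne))
end

section
/- Let V be a finite-dimensional complex vector space with dim V ≥ 3, and let Φ : V × V → V be an alternating bilinear map such that Φ(X,Y) ∈ span{X,Y} for all X, Y ∈ V. Then there exists a linear functional p on V such that Φ(X,Y) = p(X)Y − p(Y)X for all X, Y ∈ V. -/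
open Submodule Module

/-- If every vector of `W` is an eigenvector of `f`, and no single vector spans `W`,
then `f` is a scalar. -/
lemma aux_scalar {K W : Type*} [Field K] [AddCommGroup W] [Module K W]
    (f : W →ₗ[K] W) (hf : ∀ w : W, f w ∈ Submodule.span K {w})
    (hW : ∀ w : W, ∃ u : W, u ∉ Submodule.span K {w}) :
    ∃ c : K, ∀ w : W, f w = c • w := by
  have step : ∀ (w u : W) (a b : K), w ≠ 0 → u ∉ Submodule.span K {w} →
      f w = a • w → f u = b • u → a = b := by
    intro w u a b hw hu hfw hfu
    obtain ⟨d, hd⟩ := Submodule.mem_span_singleton.mp (hf (w + u))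
    rw [map_add, hfw, hfu, smul_add] at hd
    have hrel : (a - d) • w = (d - b) • u := by
      rw [sub_smul, sub_smul]
      linear_combination (norm := module) -hd
    by_cases hdb : d = b
    · subst hdb
      rw [sub_self, zero_smul] at hrel
      rcases smul_eq_zero.mp hrel with h | h
      · exact sub_eq_zero.mp h
      · exact absurd h hw
    · exfalso
      apply hu
      have : u = (d - b)⁻¹ • ((a - d) • w) := by
        rw [hrel, smul_smul, inv_mul_cancel₀ (sub_ne_zero.mpr hdb), one_smul]
      rw [this]
      exact Submodule.smul_mem _ _ (Submodule.smul_mem _ _ (Submodule.mem_span_singleton_self w))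
  obtain ⟨w0, hw0'⟩ := hW 0
  have hw0 : w0 ≠ 0 := by
    intro h; exact hw0' (h ▸ Submodule.mem_span_singleton_self w0)
  obtain ⟨c, hc⟩ := Submodule.mem_span_singleton.mp (hf w0)
  refine ⟨c, fun w => ?_⟩
  by_cases hw : w ∈ Submodule.span K {w0}
  · obtain ⟨t, ht⟩ := Submodule.mem_span_singleton.mp hw
    rw [← ht, map_smul, ← hc, smul_smul, smul_smul, mul_comm]
  · obtain ⟨a, ha⟩ := Submodule.mem_span_singleton.mp (hf w)
    have := step w0 w c a hw0 hw hc.symm ha.symm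
    rw [← ha, this]

theorem stmt_18 (V : Type*) [AddCommGroup V] [Module ℂ V] [FiniteDimensional ℂ V]
    (hdim : 3 ≤ Module.finrank ℂ V)
    (Φ : V →ₗ[ℂ] V →ₗ[ℂ] V)
    (hΦalt : ∀ X : V, Φ X X = 0)
    (hspan : ∀ X Y : V, Φ X Y ∈ Submodule.span ℂ ({X, Y} : Set V)) :
    ∃ p : Module.Dual ℂ V, ∀ X Y : V, Φ X Y = p X • Y - p Y • X := by
  classical
  -- skew-symmetry
  have hskew : ∀ X Y : V, Φ Y X = - Φ X Y := by
    intro X Y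
    have h := hΦalt (X + Y)
    simp only [map_add, LinearMap.add_apply, hΦalt, zero_add, add_zero] at h
    linear_combination (norm := module) h
  -- there is always a vector outside the span of a single vector
  have hout : ∀ X : V, ∃ Z : V, Z ∉ (Submodule.span ℂ {X}) := by
    intro X
    by_contra h
    push_neg at h
    have htop : Submodule.span ℂ ({X} : Set V) = ⊤ := Submodule.eq_top_iff'.mpr h
    have h1 : Module.finrank ℂ V ≤ 1 := by
      have := finrank_span_le_card (R := ℂ) ({X} : Set V)
      simp only [Set.toFinset_singleton, Finset.card_singleton] at this
      rw [htop, finrank_top] at this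
      exact this
    omega
  -- the key existence: for X ≠ 0, there is c with Φ X Y ≡ c • Y mod span{X}
  have key : ∀ X : V, X ≠ 0 → ∃ c : ℂ, ∀ Y : V, Φ X Y - c • Y ∈ Submodule.span ℂ {X} := by
    intro X hX
    set S : Submodule ℂ V := Submodule.span ℂ {X} with hS
    have hker : S ≤ LinearMap.ker (S.mkQ ∘ₗ Φ X) := by
      intro v hv
      obtain ⟨t, ht⟩ := Submodule.mem_span_singleton.mp hv
      simp [LinearMap.mem_ker, ← ht, hΦalt]
    set f : (V ⧸ S) →ₗ[ℂ] (V ⧸ S) := S.liftQ (S.mkQ ∘ₗ Φ X) hker with hf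
    have hfapp : ∀ Y : V, f (S.mkQ Y) = S.mkQ (Φ X Y) := fun Y => rfl
    have heig : ∀ w : V ⧸ S, f w ∈ Submodule.span ℂ {w} := by
      intro w
      obtain ⟨Y, rfl⟩ := S.mkQ_surjective w
      rw [hfapp]
      have h1 : S.mkQ (Φ X Y) ∈ Submodule.map S.mkQ (Submodule.span ℂ ({X, Y} : Set V)) :=
        Submodule.mem_map_of_mem (hspan X Y)
      rw [Submodule.map_span, Set.image_pair] at h1
      have hX0 : S.mkQ X = 0 := by
        rw [← LinearMap.mem_ker, Submodule.ker_mkQ]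
        exact Submodule.mem_span_singleton_self X
      rw [hX0, Submodule.span_insert_zero] at h1
      exact h1
    -- quotient has dimension ≥ 2
    have hdimQ : 2 ≤ Module.finrank ℂ (V ⧸ S) := by
      have h1 := S.finrank_quotient_add_finrank
      have h2 : Module.finrank ℂ S = 1 := by rw [hS]; exact finrank_span_singleton hX
      omega
    have hWq : ∀ w : V ⧸ S, ∃ u : V ⧸ S, u ∉ Submodule.span ℂ {w} := by
      intro w
      by_contra h
      push_neg at h
      have htop : Submodule.span ℂ ({w} : Set (V ⧸ S)) = ⊤ := Submodule.eq_top_iff'.mpr h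
      have h1 : Module.finrank ℂ (V ⧸ S) ≤ 1 := by
        have := finrank_span_le_card (R := ℂ) ({w} : Set (V ⧸ S))
        simp only [Set.toFinset_singleton, Finset.card_singleton] at this
        rw [htop, finrank_top] at this
        exact this
      omega
    obtain ⟨c, hc⟩ := aux_scalar f heig hWq
    refine ⟨c, fun Y => ?_⟩
    have h2 : S.mkQ (Φ X Y - c • Y) = 0 := by
      rw [map_sub, map_smul, ← hfapp, hc, sub_self]
    rw [← Submodule.ker_mkQ S, LinearMap.mem_ker]
    exact h2
  -- define q
  set q : V → ℂ := fun X => if h : X = 0 then 0 else Classical.choose (key X h) with hq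
  have hq0 : q 0 = 0 := by simp [hq]
  have hqspec : ∀ (X : V) (hX : X ≠ 0) (Y : V),
      Φ X Y - q X • Y ∈ Submodule.span ℂ {X} := by
    intro X hX Y
    have := Classical.choose_spec (key X hX) Y
    simpa [hq, hX] using this
  -- main identity
  have main : ∀ X Y : V, Φ X Y = q X • Y - q Y • X := by
    intro X Y
    by_cases hX : X = 0
    · subst hX; simp [hq0]
    by_cases hY : Y = 0
    · subst hY; simp [hq0]
    by_cases hYX : Y ∈ Submodule.span ℂ ({X} : Set V)
    · -- Y = t • X
      obtain ⟨t, ht⟩ := Submodule.mem_span_singleton.mp hYX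
      have ht0 : t ≠ 0 := by rintro rfl; simp at ht; exact hY ht.symm
      -- q (t • X) = t * q X
      have hqt : q Y = t * q X := by
        obtain ⟨Z, hZ⟩ := hout X
        have h1 : Φ Y Z - q Y • Z ∈ Submodule.span ℂ {X} := by
          have hsp : Submodule.span ℂ ({Y} : Set V) = Submodule.span ℂ ({X} : Set V) := by
            rw [← ht]; exact Submodule.span_singleton_smul_eq (isUnit_iff_ne_zero.mpr ht0) X
          have := hqspec Y hY Z
          rwa [hsp] at this
        have h2 : Φ Y Z - (t * q X) • Z ∈ Submodule.span ℂ {X} := by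
          have h3 := hqspec X hX Z
          have h4 : t • (Φ X Z - q X • Z) ∈ Submodule.span ℂ {X} :=
            Submodule.smul_mem _ _ h3
          have h5 : Φ Y Z = t • Φ X Z := by rw [← ht, map_smul, LinearMap.smul_apply]
          have : t • (Φ X Z - q X • Z) = Φ Y Z - (t * q X) • Z := by
            rw [h5, smul_sub, smul_smul]
          rwa [this] at h4
        have h6 : ((t * q X) - q Y) • Z ∈ Submodule.span ℂ {X} := by
          have := Submodule.sub_mem _ h1 h2
          have heq : (Φ Y Z - q Y • Z) - (Φ Y Z - (t * q X) • Z) = ((t * q X) - q Y) • Z := by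
            rw [sub_smul]; abel
          rwa [heq] at this
        by_contra hne
        have hc0 : (t * q X) - q Y ≠ 0 := fun h => hne (by linear_combination -h)
        have : Z ∈ Submodule.span ℂ ({X} : Set V) := by
          have := Submodule.smul_mem _ ((t * q X) - q Y)⁻¹ h6
          rwa [smul_smul, inv_mul_cancel₀ hc0, one_smul] at this
        exact hZ this
      have hzero : Φ X Y = 0 := by
        rw [← ht, map_smul, hΦalt, smul_zero]
      rw [hzero, hqt, ← ht]
      module
    · -- X, Y independent
      have hXY : X ∉ Submodule.span ℂ ({Y} : Set V) := by
        intro h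
        obtain ⟨s, hs⟩ := Submodule.mem_span_singleton.mp h
        have hs0 : s ≠ 0 := by rintro rfl; simp at hs; exact hX hs.symm
        apply hYX
        rw [Submodule.mem_span_singleton]
        exact ⟨s⁻¹, by rw [← hs, smul_smul, inv_mul_cancel₀ hs0, one_smul]⟩
      obtain ⟨a, ha⟩ := Submodule.mem_span_singleton.mp (hqspec X hX Y)
      obtain ⟨b, hb⟩ := Submodule.mem_span_singleton.mp (hqspec Y hY X)
      -- ha : a • X = Φ X Y - q X • Y ; hb : b • Y = Φ Y X - q Y • X
      have h1 := hskew X Y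
      have hrel : (a + q Y) • X = (- q X - b) • Y := by
        linear_combination (norm := module) ha + hb + h1
      have hcoeff : - q X - b = 0 := by
        by_contra hc
        apply hYX
        have := congrArg (fun z => (- q X - b)⁻¹ • z) hrel
        simp only [smul_smul, inv_mul_cancel₀ hc, one_smul] at this
        rw [Submodule.mem_span_singleton]
        exact ⟨(- q X - b)⁻¹ * (a + q Y), this⟩
      have hcoeff2 : a + q Y = 0 := by
        rw [hcoeff, zero_smul] at hrel
        rcases smul_eq_zero.mp hrel with h | h
        · exact h
        · exact absurd h hX
      have haval : a = - q Y := by linear_combination hcoeff2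
      have hfin : Φ X Y = q X • Y + a • X := by
        linear_combination (norm := module) -ha
      rw [hfin, haval, neg_smul]
      abel
  -- q is linear
  obtain ⟨z0, hz0⟩ : ∃ z : V, z ≠ 0 := by
    have : Nontrivial V := Module.nontrivial_of_finrank_pos (R := ℂ) (by omega)
    exact exists_ne 0
  have hadd : ∀ X Y : V, q (X + Y) = q X + q Y := by
    intro X Y
    have h1 := main (X + Y) z0
    have h2 := main X z0
    have h3 := main Y z0
    rw [map_add, LinearMap.add_apply, h2, h3] at h1
    have h4 : (q (X + Y) - q X - q Y) • z0 = 0 := by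
      rw [sub_smul, sub_smul]
      linear_combination (norm := module) -h1
    rcases smul_eq_zero.mp h4 with h | h
    · linear_combination h
    · exact absurd h hz0
  have hsmul : ∀ (t : ℂ) (X : V), q (t • X) = t * q X := by
    intro t X
    have h1 := main (t • X) z0
    have h2 := main X z0
    rw [map_smul, LinearMap.smul_apply, h2] at h1
    have h4 : (q (t • X) - t * q X) • z0 = 0 := by
      rw [sub_smul]
      linear_combination (norm := module) -h1
    rcases smul_eq_zero.mp h4 with h | h
    · linear_combination h
    · exact absurd h hz0
  refine ⟨{ toFun := q, map_add' := hadd, map_smul' := fun t X => by simp [hsmul] }, ?_⟩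
  intro X Y
  exact main X Y
end
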